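/- Let ω₁, ω₂ : ℝ → [0,∞) be locally bounded measurable, and let w^{(ω₁)}, w^{(ω₂)} be the unique locally bounded solutions of w^{(ωᵢ)}(x,y) = w(x,y) + ∫_y^x w(x,z) ωᵢ(z) w^{(ωᵢ)}(z,y) dz vanishing for x < y. Then for all x ≥ y: w^{(ω₂)}(x,y) - w^{(ω₁)}(x,y) = ∫_y^x w^{(ω₁)}(x,z) (ω₂(z) - ω₁(z)) w^{(ω₂)}(z,y) dz. -/

import Mathlib

open MeasureTheory Set Real

private lemma aux_bd3 {a b c A B C : ℝ} (ha : |a| ≤ A) (hb : |b| ≤ B) (hc : |c| ≤ C) :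
    |a * b * c| ≤ A * B * C := by
  have h1 : |a * b * c| = |a| * |b| * |c| := by rw [abs_mul, abs_mul]
  rw [h1]
  exact mul_le_mul (mul_le_mul ha hb (abs_nonneg b) ((abs_nonneg a).trans ha)) hc
    (abs_nonneg c) (mul_nonneg ((abs_nonneg a).trans ha) ((abs_nonneg b).trans hb))

private lemma aux_integrableOn {f : ℝ → ℝ} (hf : Measurable f) {s : Set ℝ}
    (hs : MeasurableSet s) (hfin : volume s < ⊤) {C : ℝ} (hC : ∀ z ∈ s, |f z| ≤ C) :
    IntegrableOn f s := by
  refine Integrable.mono'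
    ((integrableOn_const_iff (C := C)).mpr (Or.inr hfin))
    hf.aestronglyMeasurable.restrict ?_
  filter_upwards [ae_restrict_mem hs] with z hz
  simpa using hC z hz

private lemma aux_tri_fubini {x y : ℝ} (f : ℝ × ℝ → ℝ) (hf : Measurable f) (C : ℝ)
    (hC : ∀ p : ℝ × ℝ, p.1 ∈ Ioc y x → p.2 ∈ Ioc y x → |f p| ≤ C) :
    ∫ z in Ioc y x, ∫ u in Ioc z x, f (z, u)
      = ∫ u in Ioc y x, ∫ z in Ioo y u, f (z, u) := by
  set S : Set (ℝ × ℝ) := {p | y < p.1 ∧ p.1 < p.2 ∧ p.2 ≤ x} with hSdef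
  have hS : MeasurableSet S := by
    exact (measurableSet_lt measurable_const measurable_fst).inter
      ((measurableSet_lt measurable_fst measurable_snd).inter
        (measurableSet_le measurable_snd measurable_const))
  have hsub : S ⊆ Ioc y x ×ˢ Ioc y x := by
    rintro ⟨z, u⟩ ⟨h1, h2, h3⟩
    exact ⟨⟨h1, le_of_lt (lt_of_lt_of_le h2 h3)⟩, ⟨h1.trans h2, h3⟩⟩
  have hfin : volume S < ⊤ := by
    refine lt_of_le_of_lt (measure_mono hsub) ?_
    rw [Measure.volume_eq_prod, Measure.prod_prod]
    exact ENNReal.mul_lt_top (measure_Ioc_lt_top (μ := volume) (a := y) (b := x))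
      (measure_Ioc_lt_top (μ := volume) (a := y) (b := x))
  have hFint : Integrable (S.indicator f) := by
    rw [integrable_indicator_iff hS]
    refine Integrable.mono'
      ((integrableOn_const_iff (C := C)).mpr (Or.inr hfin))
      hf.aestronglyMeasurable.restrict ?_
    filter_upwards [ae_restrict_mem hS] with p hp
    simpa using hC p (hsub hp).1 (hsub hp).2
  have hL : ∫ z in Ioc y x, ∫ u in Ioc z x, f (z, u)
      = ∫ z, ∫ u, S.indicator f (z, u) := by
    rw [← integral_indicator measurableSet_Ioc]
    congr 1
    funext z
    by_cases hz : z ∈ Ioc y x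
    · rw [indicator_of_mem hz, ← integral_indicator measurableSet_Ioc]
      congr 1
      funext u
      by_cases hu : u ∈ Ioc z x
      · rw [indicator_of_mem hu, indicator_of_mem (show (z, u) ∈ S from ⟨hz.1, hu.1, hu.2⟩)]
      · rw [indicator_of_notMem hu, indicator_of_notMem]
        rintro ⟨_, h2, h3⟩
        exact hu ⟨h2, h3⟩
    · rw [indicator_of_notMem hz]
      have h0 : ∀ u, S.indicator f (z, u) = 0 := fun u =>
        indicator_of_notMem (fun hmem => hz (hsub hmem).1) f
      simp [h0]
  have hswap : ∫ z, ∫ u, S.indicator f (z, u) = ∫ u, ∫ z, S.indicator f (z, u) := by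
    have huncurry : (Function.uncurry fun z u => S.indicator f (z, u)) = S.indicator f := by
      funext p
      simp [Function.uncurry]
    have h1 : Integrable (Function.uncurry fun z u => S.indicator f (z, u))
        (volume.prod volume) := by
      rw [huncurry, ← Measure.volume_eq_prod]
      exact hFint
    exact integral_integral_swap h1
  have hR : ∫ u, ∫ z, S.indicator f (z, u)
      = ∫ u in Ioc y x, ∫ z in Ioo y u, f (z, u) := by
    rw [← integral_indicator measurableSet_Ioc]
    congr 1
    funext u
    by_cases hu : u ∈ Ioc y x
    · rw [indicator_of_mem hu, ← integral_indicator measurableSet_Ioo]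
      congr 1
      funext z
      by_cases hz : z ∈ Ioo y u
      · rw [indicator_of_mem hz, indicator_of_mem (show (z, u) ∈ S from ⟨hz.1, hz.2, hu.2⟩)]
      · rw [indicator_of_notMem hz, indicator_of_notMem]
        rintro ⟨h1, h2, _⟩
        exact hz ⟨h1, h2⟩
    · rw [indicator_of_notMem hu]
      have h0 : ∀ z, S.indicator f (z, u) = 0 := fun z =>
        indicator_of_notMem (fun hmem => hu (hsub hmem).2) f
      simp [h0]
  rw [hL, hswap, hR]

private lemma aux_mem_bound {y x z : ℝ} (hz : z ∈ Ioc y x) : |z| ≤ max |x| |y| := by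
  obtain ⟨h1, h2⟩ := hz
  have hx : x ≤ |x| := le_abs_self x
  have hy : -|y| ≤ y := neg_abs_le y
  have h3 : |x| ≤ max |x| |y| := le_max_left _ _
  have h4 : |y| ≤ max |x| |y| := le_max_right _ _
  rw [abs_le]
  constructor <;> linarith

/-- resolvent identity, Proposition 3.2 for `w`:
`w^{(ω₂)}(x,y) - w^{(ω₁)}(x,y) = ∫_y^x w^{(ω₁)}(x,z)(ω₂(z)-ω₁(z)) w^{(ω₂)}(z,y) dz`. -/
theorem stmt_4 (w : ℝ → ℝ → ℝ) (hwm : Measurable (Function.uncurry w))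
    (hwloc : ∀ r : ℝ, ∃ C : ℝ, ∀ x y : ℝ, |x| ≤ r → |y| ≤ r → |w x y| ≤ C)
    (hw0 : ∀ x y : ℝ, x < y → w x y = 0)
    (ω₁ ω₂ : ℝ → ℝ) (hω₁m : Measurable ω₁) (hω₂m : Measurable ω₂)
    (hω₁pos : ∀ z, 0 ≤ ω₁ z) (hω₂pos : ∀ z, 0 ≤ ω₂ z)
    (hω₁loc : ∀ r : ℝ, ∃ C : ℝ, ∀ z : ℝ, |z| ≤ r → ω₁ z ≤ C)
    (hω₂loc : ∀ r : ℝ, ∃ C : ℝ, ∀ z : ℝ, |z| ≤ r → ω₂ z ≤ C)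
    (W₁ W₂ : ℝ → ℝ → ℝ)
    (hW₁m : Measurable (Function.uncurry W₁)) (hW₂m : Measurable (Function.uncurry W₂))
    (hW₁loc : ∀ r : ℝ, ∃ C : ℝ, ∀ x y : ℝ, |x| ≤ r → |y| ≤ r → |W₁ x y| ≤ C)
    (hW₂loc : ∀ r : ℝ, ∃ C : ℝ, ∀ x y : ℝ, |x| ≤ r → |y| ≤ r → |W₂ x y| ≤ C)
    (hW₁0 : ∀ x y : ℝ, x < y → W₁ x y = 0)
    (hW₂0 : ∀ x y : ℝ, x < y → W₂ x y = 0)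
    (hW₁eq : ∀ x y : ℝ,
      W₁ x y = w x y + ∫ z in Set.Ioc y x, w x z * ω₁ z * W₁ z y)
    (hW₂eq : ∀ x y : ℝ,
      W₂ x y = w x y + ∫ z in Set.Ioc y x, w x z * ω₂ z * W₂ z y)
    -- the transposed-equation identity for `W₁` (Lemma 2.2) may be assumed:
    (htrans : ∀ x y : ℝ,
      W₁ x y = w x y + ∫ z in Set.Ioc y x, W₁ x z * ω₁ z * w z y)
    -- uniqueness of locally bounded solutions may be assumed:
    (huniq : ∀ (h : ℝ → ℝ → ℝ) (H₁ H₂ : ℝ → ℝ → ℝ) (ϖ : ℝ → ℝ),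
      (∀ r : ℝ, ∃ C : ℝ, ∀ x y : ℝ, |x| ≤ r → |y| ≤ r → |H₁ x y| ≤ C) →
      (∀ r : ℝ, ∃ C : ℝ, ∀ x y : ℝ, |x| ≤ r → |y| ≤ r → |H₂ x y| ≤ C) →
      (∀ x y : ℝ, x ≤ y → H₁ x y = h x y) →
      (∀ x y : ℝ, x ≤ y → H₂ x y = h x y) →
      (∀ x y : ℝ, H₁ x y = h x y + ∫ z in Set.Ioc y x, w x z * ϖ z * H₁ z y) →
      (∀ x y : ℝ, H₂ x y = h x y + ∫ z in Set.Ioc y x, w x z * ϖ z * H₂ z y) →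
      H₁ = H₂) :
    ∀ x y : ℝ, y ≤ x →
      W₂ x y - W₁ x y
        = ∫ z in Set.Ioc y x, W₁ x z * (ω₂ z - ω₁ z) * W₂ z y := by
  -- diagonal values
  have hW₁diag : ∀ x : ℝ, W₁ x x = w x x := by
    intro x
    rw [hW₁eq x x, Set.Ioc_self]
    simp
  have hW₂diag : ∀ x : ℝ, W₂ x x = w x x := by
    intro x
    rw [hW₂eq x x, Set.Ioc_self]
    simp
  -- measurability of slices
  have hmw : ∀ x : ℝ, Measurable fun z : ℝ => w x z :=
    fun x => hwm.comp (measurable_const.prodMk measurable_id)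
  have hmW₁l : ∀ x : ℝ, Measurable fun z : ℝ => W₁ x z :=
    fun x => hW₁m.comp (measurable_const.prodMk measurable_id)
  have hmW₁r : ∀ y : ℝ, Measurable fun z : ℝ => W₁ z y :=
    fun y => hW₁m.comp (measurable_id.prodMk measurable_const)
  have hmW₂r : ∀ y : ℝ, Measurable fun z : ℝ => W₂ z y :=
    fun y => hW₂m.comp (measurable_id.prodMk measurable_const)
  -- bound for the difference of the omegas
  -- the main uniqueness argument
  have key := huniq
    (fun x y => ∫ z in Set.Ioc y x, w x z * (ω₂ z - ω₁ z) * W₂ z y)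
    (fun x y => W₂ x y - W₁ x y)
    (fun x y => ∫ z in Set.Ioc y x, W₁ x z * (ω₂ z - ω₁ z) * W₂ z y)
    ω₁
    (by -- local boundedness of the difference
      intro r
      obtain ⟨C₁, hC₁⟩ := hW₁loc r
      obtain ⟨C₂, hC₂⟩ := hW₂loc r
      refine ⟨C₂ + C₁, fun x y hx hy => ?_⟩
      show |W₂ x y - W₁ x y| ≤ C₂ + C₁
      have h1 := abs_le.mp (hC₁ x y hx hy)
      have h2 := abs_le.mp (hC₂ x y hx hy)
      rw [abs_le]
      constructor <;> linarith)
    (by -- local boundedness of the integral expression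
      intro r
      obtain ⟨C₁, hC₁⟩ := hW₁loc r
      obtain ⟨C₂, hC₂⟩ := hW₂loc r
      obtain ⟨Cω₁, hCω₁⟩ := hω₁loc r
      obtain ⟨Cω₂, hCω₂⟩ := hω₂loc r
      refine ⟨max 0 (C₁ * (Cω₁ + Cω₂) * C₂ * (2 * r)), fun x y hx hy => ?_⟩
      show |∫ z in Set.Ioc y x, W₁ x z * (ω₂ z - ω₁ z) * W₂ z y|
        ≤ max 0 (C₁ * (Cω₁ + Cω₂) * C₂ * (2 * r))
      rcases le_or_gt x y with h | h
      · rw [Set.Ioc_eq_empty (not_lt.mpr h)]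
        simpa using le_max_left _ _
      · have hr0 : 0 ≤ r := (abs_nonneg x).trans hx
        have hC₁0 : 0 ≤ C₁ := (abs_nonneg _).trans (hC₁ x x hx hx)
        have hC₂0 : 0 ≤ C₂ := (abs_nonneg _).trans (hC₂ x x hx hx)
        have hCω₁0 : 0 ≤ Cω₁ := (hω₁pos x).trans (hCω₁ x hx)
        have hCω₂0 : 0 ≤ Cω₂ := (hω₂pos x).trans (hCω₂ x hx)
        have hrz : ∀ z ∈ Ioc y x, |z| ≤ r := fun z hz =>
          (aux_mem_bound hz).trans (max_le hx hy)
        have hbd : ∀ z ∈ Ioc y x,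
            ‖W₁ x z * (ω₂ z - ω₁ z) * W₂ z y‖ ≤ C₁ * (Cω₁ + Cω₂) * C₂ := by
          intro z hz
          have hzr := hrz z hz
          refine aux_bd3 (hC₁ x z hx hzr) ?_ (hC₂ z y hzr hy)
          have e1 := hCω₁ z hzr
          have e2 := hCω₂ z hzr
          have e3 := hω₁pos z
          have e4 := hω₂pos z
          rw [abs_le]
          constructor <;> linarith
        have hmeas : AEStronglyMeasurable
            (fun z => W₁ x z * (ω₂ z - ω₁ z) * W₂ z y)
            (volume.restrict (Ioc y x)) :=
          (((hmW₁l x).mul (hω₂m.sub hω₁m)).mul (hmW₂r y)).aestronglyMeasurable.restrict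
        have hkey := norm_setIntegral_le_of_norm_le_const
          (s := Ioc y x) (μ := volume) measure_Ioc_lt_top hbd
        have hvol : volume.real (Ioc y x) = x - y := by
          rw [measureReal_def, Real.volume_Ioc, ENNReal.toReal_ofReal (by linarith)]
        rw [hvol] at hkey
        have hxy2 : x - y ≤ 2 * r := by
          have h1 := abs_le.mp hx
          have h2 := abs_le.mp hy
          linarith
        have hCnn : 0 ≤ C₁ * (Cω₁ + Cω₂) * C₂ := by positivity
        have : C₁ * (Cω₁ + Cω₂) * C₂ * (x - y) ≤ C₁ * (Cω₁ + Cω₂) * C₂ * (2 * r) :=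
          mul_le_mul_of_nonneg_left hxy2 hCnn
        calc |∫ z in Ioc y x, W₁ x z * (ω₂ z - ω₁ z) * W₂ z y|
            ≤ C₁ * (Cω₁ + Cω₂) * C₂ * (x - y) := hkey
          _ ≤ C₁ * (Cω₁ + Cω₂) * C₂ * (2 * r) := this
          _ ≤ max 0 (C₁ * (Cω₁ + Cω₂) * C₂ * (2 * r)) := le_max_right _ _)
    (by -- vanishing of the difference below the diagonal
      intro x y hxy
      show W₂ x y - W₁ x y = ∫ z in Set.Ioc y x, w x z * (ω₂ z - ω₁ z) * W₂ z y
      rw [Set.Ioc_eq_empty (not_lt.mpr hxy)]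
      simp only [Measure.restrict_empty, integral_zero_measure]
      rcases eq_or_lt_of_le hxy with rfl | h
      · rw [hW₁diag, hW₂diag]
        ring
      · rw [hW₁0 _ _ h, hW₂0 _ _ h]
        ring)
    (by -- vanishing of the integral expression below the diagonal
      intro x y hxy
      show (∫ z in Set.Ioc y x, W₁ x z * (ω₂ z - ω₁ z) * W₂ z y)
        = ∫ z in Set.Ioc y x, w x z * (ω₂ z - ω₁ z) * W₂ z y
      rw [Set.Ioc_eq_empty (not_lt.mpr hxy)]
      simp)
    (by -- the equation for the difference
      intro x y
      show W₂ x y - W₁ x y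
        = (∫ z in Set.Ioc y x, w x z * (ω₂ z - ω₁ z) * W₂ z y)
          + ∫ z in Set.Ioc y x, w x z * ω₁ z * (W₂ z y - W₁ z y)
      rcases le_or_gt x y with h | h
      · rw [Set.Ioc_eq_empty (not_lt.mpr h)]
        simp only [Measure.restrict_empty, integral_zero_measure, add_zero]
        rcases eq_or_lt_of_le h with rfl | h'
        · rw [hW₁diag, hW₂diag]
          ring
        · rw [hW₁0 _ _ h', hW₂0 _ _ h']
          ring
      · -- y < x : manipulate the integrals
        set r := max |x| |y| with hrdef
        obtain ⟨Cw, hCw⟩ := hwloc r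
        obtain ⟨C₁, hC₁⟩ := hW₁loc r
        obtain ⟨C₂, hC₂⟩ := hW₂loc r
        obtain ⟨Cω₁, hCω₁⟩ := hω₁loc r
        obtain ⟨Cω₂, hCω₂⟩ := hω₂loc r
        have hxr : |x| ≤ r := le_max_left _ _
        have hyr : |y| ≤ r := le_max_right _ _
        have hrz : ∀ z ∈ Ioc y x, |z| ≤ r := fun z hz => aux_mem_bound hz
        have hΔ : ∀ z : ℝ, |z| ≤ r → |ω₂ z - ω₁ z| ≤ Cω₁ + Cω₂ := by
          intro z hz
          have e1 := hCω₁ z hz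
          have e2 := hCω₂ z hz
          have e3 := hω₁pos z
          have e4 := hω₂pos z
          rw [abs_le]
          constructor <;> linarith
        have hω₁abs : ∀ z : ℝ, |z| ≤ r → |ω₁ z| ≤ Cω₁ := by
          intro z hz
          rw [abs_of_nonneg (hω₁pos z)]
          exact hCω₁ z hz
        have hω₂abs : ∀ z : ℝ, |z| ≤ r → |ω₂ z| ≤ Cω₂ := by
          intro z hz
          rw [abs_of_nonneg (hω₂pos z)]
          exact hCω₂ z hz
        have hi₂ : IntegrableOn (fun z => w x z * ω₂ z * W₂ z y) (Ioc y x) :=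
          aux_integrableOn (((hmw x).mul hω₂m).mul (hmW₂r y)) measurableSet_Ioc
            measure_Ioc_lt_top (C := Cw * Cω₂ * C₂)
            (fun z hz => aux_bd3 (hCw x z hxr (hrz z hz)) (hω₂abs z (hrz z hz))
              (hC₂ z y (hrz z hz) hyr))
        have hi₁ : IntegrableOn (fun z => w x z * ω₁ z * W₁ z y) (Ioc y x) :=
          aux_integrableOn (((hmw x).mul hω₁m).mul (hmW₁r y)) measurableSet_Ioc
            measure_Ioc_lt_top (C := Cw * Cω₁ * C₁)
            (fun z hz => aux_bd3 (hCw x z hxr (hrz z hz)) (hω₁abs z (hrz z hz))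
              (hC₁ z y (hrz z hz) hyr))
        have hi₃ : IntegrableOn (fun z => w x z * (ω₂ z - ω₁ z) * W₂ z y) (Ioc y x) :=
          aux_integrableOn (((hmw x).mul (hω₂m.sub hω₁m)).mul (hmW₂r y)) measurableSet_Ioc
            measure_Ioc_lt_top (C := Cw * (Cω₁ + Cω₂) * C₂)
            (fun z hz => aux_bd3 (hCw x z hxr (hrz z hz)) (hΔ z (hrz z hz))
              (hC₂ z y (hrz z hz) hyr))
        have hi₄ : IntegrableOn (fun z => w x z * ω₁ z * (W₂ z y - W₁ z y)) (Ioc y x) :=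
          aux_integrableOn (((hmw x).mul hω₁m).mul ((hmW₂r y).sub (hmW₁r y)))
            measurableSet_Ioc measure_Ioc_lt_top (C := Cw * Cω₁ * (C₂ + C₁))
            (fun z hz => by
              refine aux_bd3 (hCw x z hxr (hrz z hz)) (hω₁abs z (hrz z hz)) ?_
              have h1 := abs_le.mp (hC₁ z y (hrz z hz) hyr)
              have h2 := abs_le.mp (hC₂ z y (hrz z hz) hyr)
              simp only [Pi.sub_apply]
              rw [abs_le]
              constructor <;> linarith)
        rw [hW₂eq x y, hW₁eq x y]
        have hsimp : (w x y + ∫ z in Ioc y x, w x z * ω₂ z * W₂ z y)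
            - (w x y + ∫ z in Ioc y x, w x z * ω₁ z * W₁ z y)
            = (∫ z in Ioc y x, w x z * ω₂ z * W₂ z y)
              - ∫ z in Ioc y x, w x z * ω₁ z * W₁ z y := by ring
        rw [hsimp, ← integral_sub hi₂ hi₁, ← integral_add hi₃ hi₄]
        refine setIntegral_congr_fun measurableSet_Ioc fun z _ => ?_
        have e1 := hW₂eq z y
        ring)
    (by -- the equation for the integral expression
      intro x y
      show (∫ z in Set.Ioc y x, W₁ x z * (ω₂ z - ω₁ z) * W₂ z y)
        = (∫ z in Set.Ioc y x, w x z * (ω₂ z - ω₁ z) * W₂ z y)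
          + ∫ z in Set.Ioc y x, w x z * ω₁ z *
              ∫ v in Set.Ioc y z, W₁ z v * (ω₂ v - ω₁ v) * W₂ v y
      rcases le_or_gt x y with h | h
      · rw [Set.Ioc_eq_empty (not_lt.mpr h)]
        simp
      · set r := max |x| |y| with hrdef
        obtain ⟨Cw, hCw⟩ := hwloc r
        obtain ⟨C₁, hC₁⟩ := hW₁loc r
        obtain ⟨C₂, hC₂⟩ := hW₂loc r
        obtain ⟨Cω₁, hCω₁⟩ := hω₁loc r
        obtain ⟨Cω₂, hCω₂⟩ := hω₂loc r
        have hxr : |x| ≤ r := le_max_left _ _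
        have hyr : |y| ≤ r := le_max_right _ _
        have hrz : ∀ z ∈ Ioc y x, |z| ≤ r := fun z hz => aux_mem_bound hz
        have hΔ : ∀ z : ℝ, |z| ≤ r → |ω₂ z - ω₁ z| ≤ Cω₁ + Cω₂ := by
          intro z hz
          have e1 := hCω₁ z hz
          have e2 := hCω₂ z hz
          have e3 := hω₁pos z
          have e4 := hω₂pos z
          rw [abs_le]
          constructor <;> linarith
        have hω₁abs : ∀ z : ℝ, |z| ≤ r → |ω₁ z| ≤ Cω₁ := by
          intro z hz
          rw [abs_of_nonneg (hω₁pos z)]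
          exact hCω₁ z hz
        have hi₃ : IntegrableOn (fun z => w x z * (ω₂ z - ω₁ z) * W₂ z y) (Ioc y x) :=
          aux_integrableOn (((hmw x).mul (hω₂m.sub hω₁m)).mul (hmW₂r y)) measurableSet_Ioc
            measure_Ioc_lt_top (C := Cw * (Cω₁ + Cω₂) * C₂)
            (fun z hz => aux_bd3 (hCw x z hxr (hrz z hz)) (hΔ z (hrz z hz))
              (hC₂ z y (hrz z hz) hyr))
        have hi₅ : IntegrableOn
            (fun z => (W₁ x z - w x z) * ((ω₂ z - ω₁ z) * W₂ z y)) (Ioc y x) := by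
          have : ∀ z, (W₁ x z - w x z) * ((ω₂ z - ω₁ z) * W₂ z y)
              = (W₁ x z - w x z) * (ω₂ z - ω₁ z) * W₂ z y := fun z => by ring
          simp only [this]
          refine aux_integrableOn (((hmW₁l x).sub (hmw x)).mul (hω₂m.sub hω₁m)
            |>.mul (hmW₂r y)) measurableSet_Ioc measure_Ioc_lt_top
            (C := (C₁ + Cw) * (Cω₁ + Cω₂) * C₂) (fun z hz => ?_)
          refine aux_bd3 ?_ (hΔ z (hrz z hz)) (hC₂ z y (hrz z hz) hyr)
          have h1 := abs_le.mp (hC₁ x z hxr (hrz z hz))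
          have h2 := abs_le.mp (hCw x z hxr (hrz z hz))
          simp only [Pi.sub_apply]
          rw [abs_le]
          constructor <;> linarith
        -- split off the leading term
        have hsplit : (∫ z in Ioc y x, W₁ x z * (ω₂ z - ω₁ z) * W₂ z y)
            = (∫ z in Ioc y x, w x z * (ω₂ z - ω₁ z) * W₂ z y)
              + ∫ z in Ioc y x, (W₁ x z - w x z) * ((ω₂ z - ω₁ z) * W₂ z y) := by
          rw [← integral_add hi₃ hi₅]
          refine setIntegral_congr_fun measurableSet_Ioc fun z _ => ?_
          ring
        rw [hsplit]
        congr 1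
        -- now the Fubini step on the remainder term
        have hsub1 : (∫ z in Ioc y x, (W₁ x z - w x z) * ((ω₂ z - ω₁ z) * W₂ z y))
            = ∫ z in Ioc y x,
                (∫ u in Ioc z x, w x u * ω₁ u * W₁ u z) * ((ω₂ z - ω₁ z) * W₂ z y) := by
          refine setIntegral_congr_fun measurableSet_Ioc fun z _ => ?_
          have := hW₁eq x z
          have hWw : W₁ x z - w x z = ∫ u in Ioc z x, w x u * ω₁ u * W₁ u z := by
            rw [this]; ring
          rw [hWw]
        have hsub2 : (∫ z in Ioc y x,
              (∫ u in Ioc z x, w x u * ω₁ u * W₁ u z) * ((ω₂ z - ω₁ z) * W₂ z y))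
            = ∫ z in Ioc y x,
                ∫ u in Ioc z x, (w x u * ω₁ u * W₁ u z) * ((ω₂ z - ω₁ z) * W₂ z y) := by
          refine setIntegral_congr_fun measurableSet_Ioc fun z _ => ?_
          rw [← integral_mul_const]
        -- apply the triangular Fubini lemma
        set f : ℝ × ℝ → ℝ :=
          fun p => (w x p.2 * ω₁ p.2 * W₁ p.2 p.1) * ((ω₂ p.1 - ω₁ p.1) * W₂ p.1 y)
          with hfdef
        have hfm : Measurable f := by
          refine Measurable.mul (Measurable.mul (Measurable.mul ?_ ?_) ?_)
            (Measurable.mul (Measurable.sub ?_ ?_) ?_)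
          · exact hwm.comp (measurable_const.prodMk measurable_snd)
          · exact hω₁m.comp measurable_snd
          · exact hW₁m.comp (measurable_snd.prodMk measurable_fst)
          · exact hω₂m.comp measurable_fst
          · exact hω₁m.comp measurable_fst
          · exact hW₂m.comp (measurable_fst.prodMk measurable_const)
        have hfbd : ∀ p : ℝ × ℝ, p.1 ∈ Ioc y x → p.2 ∈ Ioc y x →
            |f p| ≤ (Cw * Cω₁ * C₁) * ((Cω₁ + Cω₂) * C₂) := by
          rintro ⟨z, u⟩ hz hu
          have hz' := hrz z hz
          have hu' := hrz u hu
          rw [hfdef]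
          simp only
          rw [abs_mul]
          refine mul_le_mul (aux_bd3 (hCw x u hxr hu') (hω₁abs u hu') (hC₁ u z hu' hz')) ?_
            (abs_nonneg _) ?_
          · rw [abs_mul]
            refine mul_le_mul (hΔ z hz') (hC₂ z y hz' hyr) (abs_nonneg _) ?_
            exact (abs_nonneg _).trans (hΔ z hz')
          · have h0 : (0:ℝ) ≤ Cw := (abs_nonneg _).trans (hCw x x hxr hxr)
            have h1 : (0:ℝ) ≤ Cω₁ := (hω₁pos x).trans (hCω₁ x hxr)
            have h2 : (0:ℝ) ≤ C₁ := (abs_nonneg _).trans (hC₁ x x hxr hxr)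
            positivity
        have hfub := aux_tri_fubini (x := x) (y := y) f hfm
          ((Cw * Cω₁ * C₁) * ((Cω₁ + Cω₂) * C₂)) hfbd
        have hsub3 : (∫ z in Ioc y x,
              ∫ u in Ioc z x, (w x u * ω₁ u * W₁ u z) * ((ω₂ z - ω₁ z) * W₂ z y))
            = ∫ u in Ioc y x, ∫ z in Ioo y u,
                (w x u * ω₁ u * W₁ u z) * ((ω₂ z - ω₁ z) * W₂ z y) := hfub
        rw [hsub1, hsub2, hsub3]
        refine setIntegral_congr_fun measurableSet_Ioc fun u _ => ?_
        rw [← integral_Ioc_eq_integral_Ioo]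
        have hpt : ∀ z : ℝ, (w x u * ω₁ u * W₁ u z) * ((ω₂ z - ω₁ z) * W₂ z y)
            = (w x u * ω₁ u) * (W₁ u z * (ω₂ z - ω₁ z) * W₂ z y) := fun z => by ring
        simp only [hpt]
        rw [integral_const_mul])
  intro x y _
  exact congrFun (congrFun key x) y
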